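/- Let ū_h ∈ U with ‖ū_h‖_{X*} ≤ 1/α, ȳ_h ∈ Y, and w̄_h ∈ W be arbitrary; set ρ_y := Aȳ_h − Bū_h ∈ W*. Let ζ_h be a subgradient of the norm ‖·‖_X at B*w̄_h and ζ̂ a subgradient of ‖·‖_X at B*ŵ; set ρ_u := αū_h − ζ_h ∈ U and D := (ζ̂ − ζ_h)(B*(ŵ − w̄_h)). Then (1/2)‖Cȳ_h − g^δ‖_G² − (1/2)‖Cȳ − g^δ‖_G² ≤ (1/α)(−ρ_u)(B*ŵ) + (1/α)D + ‖C(A⁻¹ρ_y)‖_G · ‖Cȳ_h − g^δ‖_G. -/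

import Mathlib

open RealInnerProductSpace NormedSpace

set_option maxHeartbeats 800000

/-- A posteriori estimate of the discrepancy functional error for Ivanov
regularization in terms of the subgradient residual and a Bregman distance. -/
theorem stmt_10
    {X G Y W : Type*}
    [NormedAddCommGroup X] [NormedSpace ℝ X] [CompleteSpace X]
    [NormedAddCommGroup G] [InnerProductSpace ℝ G] [CompleteSpace G]
    [NormedAddCommGroup Y] [NormedSpace ℝ Y] [CompleteSpace Y]
    [NormedAddCommGroup W] [NormedSpace ℝ W] [CompleteSpace W]
    (A : Y ≃L[ℝ] StrongDual ℝ W) (Astar : W ≃L[ℝ] StrongDual ℝ Y)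
    (hAadj : ∀ (y : Y) (w : W), A y w = Astar w y)
    (Bstar : W →L[ℝ] X) (B : StrongDual ℝ X →L[ℝ] StrongDual ℝ W)
    (hB : ∀ (u : StrongDual ℝ X) (w : W), B u w = u (Bstar w))
    (C : Y →L[ℝ] G) (Cstar : G →L[ℝ] StrongDual ℝ Y)
    (hCadj : ∀ (y : Y) (g : G), ⟪C y, g⟫ = Cstar g y)
    (gδ : G) (α : ℝ) (hα : 0 < α)
    (ubar : StrongDual ℝ X) (ybar : Y)
    (hubar : ‖ubar‖ ≤ 1/α) (hybar : ybar = A.symm (B ubar))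
    (hmin : ∀ u : StrongDual ℝ X, ‖u‖ ≤ 1/α →
      (1/2) * ‖C ybar - gδ‖^2 ≤ (1/2) * ‖C (A.symm (B u)) - gδ‖^2)
    (yh : Y) (what : W)
    (hwhat : what = Astar.symm (-(Cstar (C yh - gδ))))
    (uh : StrongDual ℝ X) (huh : ‖uh‖ ≤ 1/α) (wh : W)
    (ζh ζhat : StrongDual ℝ X)
    (hζh : ∀ x : X, ζh x - ζh (Bstar wh) ≤ ‖x‖ - ‖Bstar wh‖)
    (hζhat : ∀ x : X, ζhat x - ζhat (Bstar what) ≤ ‖x‖ - ‖Bstar what‖) :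
    (1/2) * ‖C yh - gδ‖^2 - (1/2) * ‖C ybar - gδ‖^2 ≤
      (1/α) * ((-(α • uh - ζh)) (Bstar what))
      + (1/α) * ((ζhat - ζh) (Bstar (what - wh)))
      + ‖C (A.symm (A yh - B uh))‖ * ‖C yh - gδ‖ := by
  set a := C yh - gδ with ha
  set b := C ybar - gδ with hb
  set ρ := A yh - B uh with hρ
  have hAyb : A ybar = B ubar := by rw [hybar]; exact A.apply_symm_apply _
  have hAsw : Astar what = -(Cstar a) := by rw [hwhat]; exact Astar.apply_symm_apply _
  -- subgradient facts
  have h1 : ‖Bstar what‖ ≤ ζhat (Bstar what) := by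
    have := hζhat 0; simp only [map_zero, norm_zero] at this; linarith
  have h2 : ζhat (Bstar wh) ≤ ‖Bstar wh‖ := by
    have h := hζhat (Bstar wh + Bstar what)
    have h2 : ‖Bstar wh + Bstar what‖ ≤ ‖Bstar wh‖ + ‖Bstar what‖ := norm_add_le _ _
    simp only [map_add] at h; linarith
  have h3 : ‖Bstar wh‖ ≤ ζh (Bstar wh) := by
    have := hζh 0; simp only [map_zero, norm_zero] at this; linarith
  -- step 1
  have step1 : (1/2) * ‖a‖^2 - (1/2) * ‖b‖^2 ≤ ⟪a, a - b⟫ := by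
    have h := @norm_sub_sq_real G _ _ a (a - b)
    have h0 : a - (a - b) = b := by abel
    rw [h0] at h
    nlinarith [sq_nonneg ‖a - b‖]
  -- step 2 : rewrite inner product
  have step2 : ⟪a, a - b⟫ = -(ρ what) - uh (Bstar what) + ubar (Bstar what) := by
    have hab : a - b = C (yh - ybar) := by rw [ha, hb, map_sub]; abel
    rw [hab, real_inner_comm, hCadj]
    have h0 : Cstar a (yh - ybar) = -(Astar what (yh - ybar)) := by
      rw [hAsw]; simp
    rw [h0, ← hAadj]
    have hA : A (yh - ybar) = ρ + (B uh - B ubar) := by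
      rw [map_sub, hAyb, hρ]; abel
    rw [hA]
    simp only [ContinuousLinearMap.add_apply, ContinuousLinearMap.sub_apply, hB]
    ring
  -- step 3 : residual term
  have step3 : -(ρ what) ≤ ‖C (A.symm ρ)‖ * ‖a‖ := by
    have hρw : ρ what = -⟪C (A.symm ρ), a⟫ := by
      have h0 : ρ what = A (A.symm ρ) what := by rw [A.apply_symm_apply]
      rw [h0, hAadj, hAsw]
      simp only [ContinuousLinearMap.neg_apply]
      rw [← hCadj, real_inner_comm]
    rw [hρw, neg_neg]
    exact real_inner_le_norm _ _
  -- step 4 : dual term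
  have hub : ubar (Bstar what) ≤ (1/α) * ζhat (Bstar what) := by
    have h4 : ubar (Bstar what) ≤ ‖ubar‖ * ‖Bstar what‖ :=
      le_trans (le_abs_self _) (ubar.le_opNorm _)
    have h5 : ‖ubar‖ * ‖Bstar what‖ ≤ (1/α) * ‖Bstar what‖ :=
      mul_le_mul_of_nonneg_right hubar (norm_nonneg _)
    have h6 : (1/α) * ‖Bstar what‖ ≤ (1/α) * ζhat (Bstar what) :=
      mul_le_mul_of_nonneg_left h1 (by positivity)
    linarith
  have h7 : (1/α) * ζhat (Bstar wh) ≤ (1/α) * ζh (Bstar wh) :=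
    mul_le_mul_of_nonneg_left (h2.trans h3) (by positivity)
  have step4 : -(uh (Bstar what)) + ubar (Bstar what) ≤
      (1/α) * ((-(α • uh - ζh)) (Bstar what))
      + (1/α) * ((ζhat - ζh) (Bstar (what - wh))) := by
    have hαne : α ≠ 0 := ne_of_gt hα
    have expand : (1/α) * ((-(α • uh - ζh)) (Bstar what))
        + (1/α) * ((ζhat - ζh) (Bstar (what - wh)))
        = -(uh (Bstar what)) + (1/α) * ζh (Bstar what)
          + ((1/α) * ζhat (Bstar what) - (1/α) * ζhat (Bstar wh)
             - (1/α) * ζh (Bstar what) + (1/α) * ζh (Bstar wh)) := by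
      simp only [ContinuousLinearMap.neg_apply, ContinuousLinearMap.sub_apply,
        ContinuousLinearMap.smul_apply, smul_eq_mul, map_sub]
      field_simp
      ring
    rw [expand]
    linarith [hub, h7]
  linarith [step1, step2.le, step3, step4]
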